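/- Let A be a type (alphabet), possibly infinite, and ω : A → {1, 2, 3, …} a weight function, extended additively to the free monoid A* by ω(a_1⋯a_k) = ω(a_1) + ⋯ + ω(a_k). Define sets of words Z_n, C_n (n ≥ 1) recursively by: Z_1 = the set of single-letter words; C_n = {w ∈ Z_n : ω(w) = n}; Z_{n+1} = {w·u : w ∈ Z_n \ C_n, u ∈ C_n*}. Then the family (C_n)_{n≥1} is a factorization of A*: every word w ∈ A* admits a unique factorization w = u_1·u_2⋯u_r (r ≥ 0) with each u_t ∈ ⋃_n C_n and weights weakly increasing: ω(u_1) ≤ ω(u_2) ≤ ⋯ ≤ ω(u_r). -/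

import Mathlib

/-- The additive extension of a weight function `ω : A → ℕ` to words. -/
def FreeMonoid.wt {A : Type*} (ω : A → ℕ) (w : FreeMonoid A) : ℕ :=
  (w.toList.map ω).sum

/-- The sets `Z_n` of the Lazard right composition associated to a weighted
alphabet `(A, ω)`: `Z_1 = A`, `Z_{n+1} = (Z_n \ C_n)·C_n*` where
`C_n = {w ∈ Z_n : ω(w) = n}`.  (The value at `0` is junk, set to `∅`.) -/
def lazardZ {A : Type*} (ω : A → ℕ) : ℕ → Set (FreeMonoid A)
  | 0 => ∅
  | 1 => Set.range FreeMonoid.of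
  | (n + 2) =>
      {w | ∃ z ∈ lazardZ ω (n + 1), z.wt ω ≠ n + 1 ∧
        ∃ u ∈ Submonoid.closure
          {v | v ∈ lazardZ ω (n + 1) ∧ v.wt ω = n + 1}, w = z * u}

/-- The sets `C_n = {w ∈ Z_n : ω(w) = n}` of the Lazard right composition. -/
def lazardC {A : Type*} (ω : A → ℕ) (n : ℕ) : Set (FreeMonoid A) :=
  {w | w ∈ lazardZ ω n ∧ w.wt ω = n}

namespace LazardAux

open FreeMonoid List

variable {A : Type*} (ω : A → ℕ)

lemma wt_mul (x y : FreeMonoid A) : (x * y).wt ω = x.wt ω + y.wt ω := by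
  simp [FreeMonoid.wt, FreeMonoid.toList_mul]

lemma wt_one : (1 : FreeMonoid A).wt ω = 0 := rfl

lemma wt_of (a : A) : (FreeMonoid.of a).wt ω = ω a := by
  simp [FreeMonoid.wt]

lemma wt_prod (l : List (FreeMonoid A)) :
    l.prod.wt ω = (l.map (FreeMonoid.wt ω)).sum := by
  induction l with
  | nil => rfl
  | cons x l ih => simp [wt_mul, ih]

variable {ω}

lemma one_le_wt (hω : ∀ a, 1 ≤ ω a) {w : FreeMonoid A} (hw : w ≠ 1) : 1 ≤ w.wt ω := by
  rcases h : w.toList with _ | ⟨a, t⟩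
  · exact absurd (FreeMonoid.toList.injective (by simp [h])) hw
  · have : ω a ≤ (w.toList.map ω).sum := by
      rw [h]; simpa using Nat.le_add_right _ _
    exact le_trans (hω a) this

lemma eq_one_of_wt_eq_zero (hω : ∀ a, 1 ≤ ω a) {w : FreeMonoid A}
    (h : w.wt ω = 0) : w = 1 := by
  by_contra hw
  have := one_le_wt hω hw
  omega

variable (ω)

/-- `Z_n*` as a submonoid. -/
def ZS (n : ℕ) : Submonoid (FreeMonoid A) := Submonoid.closure (lazardZ ω n)

variable {ω}

lemma C_subset_Z {n : ℕ} : lazardC ω n ⊆ lazardZ ω n := fun _ h => h.1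

lemma wt_mem_C {n : ℕ} {w : FreeMonoid A} (h : w ∈ lazardC ω n) : w.wt ω = n := h.2

/-- Members of `Z_{n+1}` for `n ≥ 1`: `d · (c₁⋯c_k)` with `d ∈ Z_n`, `ω(d) ≠ n`,
`c_i ∈ C_n`. -/
lemma mem_Z_succ_iff {n : ℕ} (hn : 1 ≤ n) {z : FreeMonoid A} :
    z ∈ lazardZ ω (n + 1) ↔
      ∃ d, d ∈ lazardZ ω n ∧ d.wt ω ≠ n ∧
        ∃ cs : List (FreeMonoid A), (∀ x ∈ cs, x ∈ lazardC ω n) ∧ z = d * cs.prod := by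
  obtain _ | n := n
  · omega
  constructor
  · rintro ⟨d, hd, hdw, u, hu, rfl⟩
    obtain ⟨cs, hcs, rfl⟩ := Submonoid.exists_list_of_mem_closure hu
    exact ⟨d, hd, hdw, cs, hcs, rfl⟩
  · rintro ⟨d, hd, hdw, cs, hcs, rfl⟩
    refine ⟨d, hd, hdw, cs.prod, ?_, rfl⟩
    exact Submonoid.list_prod_mem _ (fun c hc => Submonoid.subset_closure (hcs c hc))

lemma wt_ge_of_mem_Z (hω : ∀ a, 1 ≤ ω a) :
    ∀ n, 1 ≤ n → ∀ z ∈ lazardZ ω n, n ≤ z.wt ω := by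
  intro n
  induction n with
  | zero => omega
  | succ n ih =>
    intro _ z hz
    rcases Nat.eq_zero_or_pos n with rfl | hn
    · obtain ⟨a, rfl⟩ := hz
      simpa [wt_of] using hω a
    · obtain ⟨d, hd, hdw, cs, _, rfl⟩ := (mem_Z_succ_iff hn).1 hz
      have := ih hn d hd
      have : n + 1 ≤ d.wt ω := by omega
      rw [wt_mul]; omega

lemma ne_one_of_mem_Z (hω : ∀ a, 1 ≤ ω a) {n : ℕ} (hn : 1 ≤ n) {z : FreeMonoid A}
    (hz : z ∈ lazardZ ω n) : z ≠ 1 := by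
  intro h
  have := wt_ge_of_mem_Z hω n hn z hz
  rw [h, wt_one] at this
  omega

lemma Z_succ_subset_ZS {n : ℕ} (hn : 1 ≤ n) :
    lazardZ ω (n + 1) ⊆ (ZS ω n : Set (FreeMonoid A)) := by
  intro z hz
  obtain ⟨d, hd, _, cs, hcs, rfl⟩ := (mem_Z_succ_iff hn).1 hz
  exact mul_mem (Submonoid.subset_closure hd)
    (Submonoid.list_prod_mem _ fun c hc => Submonoid.subset_closure (C_subset_Z (hcs c hc)))

lemma ZS_antitone : ∀ {n m : ℕ}, 1 ≤ n → n ≤ m → ZS ω m ≤ ZS ω n := by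
  intro n m hn hnm
  induction m with
  | zero => omega
  | succ m ih =>
    rcases Nat.lt_or_ge n (m + 1) with h | h
    · have hm : 1 ≤ m := by omega
      have h1 : ZS ω (m + 1) ≤ ZS ω m := Submonoid.closure_le.2 (Z_succ_subset_ZS hm)
      exact le_trans h1 (ih (by omega))
    · have : n = m + 1 := by omega
      subst this; exact le_rfl

lemma C_subset_ZS {n m : ℕ} (hn : 1 ≤ n) (hnm : n ≤ m) :
    lazardC ω m ⊆ (ZS ω n : Set (FreeMonoid A)) := fun x hx =>
  ZS_antitone hn hnm (Submonoid.subset_closure (C_subset_Z hx))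

/-! ### Chunks -/

/-- A chunk at level `n`: a nonempty list whose head is in `Z_n` with weight `≠ n`
and whose tail consists of elements of `C_n`. -/
def IsChunk (ω : A → ℕ) (n : ℕ) (c : List (FreeMonoid A)) : Prop :=
  ∃ d cs, c = d :: cs ∧ d ∈ lazardZ ω n ∧ d.wt ω ≠ n ∧ ∀ x ∈ cs, x ∈ lazardC ω n

lemma IsChunk.prod_mem {n : ℕ} (hn : 1 ≤ n) {c : List (FreeMonoid A)}
    (hc : IsChunk ω n c) : c.prod ∈ lazardZ ω (n + 1) := by
  obtain ⟨d, cs, rfl, hd, hdw, hcs⟩ := hc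
  rw [List.prod_cons]
  exact (mem_Z_succ_iff hn).2 ⟨d, hd, hdw, cs, hcs, rfl⟩

lemma IsChunk.subset_Z {n : ℕ} {c : List (FreeMonoid A)}
    (hc : IsChunk ω n c) : ∀ x ∈ c, x ∈ lazardZ ω n := by
  obtain ⟨d, cs, rfl, hd, hdw, hcs⟩ := hc
  intro x hx
  rcases List.mem_cons.1 hx with rfl | hx
  · exact hd
  · exact (hcs x hx).1

lemma head_flatten_chunks {n : ℕ} {S : List (List (FreeMonoid A))}
    (hS : ∀ c ∈ S, IsChunk ω n c) :
    ∀ x ∈ S.flatten.head?, x.wt ω ≠ n := by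
  induction S with
  | nil => simp
  | cons c S ih =>
    obtain ⟨d, cs, rfl, hd, hdw, hcs⟩ := hS c List.mem_cons_self
    intro x hx
    simp only [List.flatten_cons, List.cons_append, List.head?_cons,
      Option.mem_def, Option.some.injEq] at hx
    subst hx; exact hdw

/-- Uniqueness of run decomposition: if `cs ++ u = es ++ v` where `cs`, `es`
consist of elements satisfying `P` and `u`, `v` have heads not satisfying `P`,
then `cs = es` and `u = v`. -/
lemma runs_eq {α : Type*} {P : α → Prop} :
    ∀ (cs : List α) (es u v : List α), (∀ x ∈ cs, P x) → (∀ x ∈ es, P x) →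
      (∀ x ∈ u.head?, ¬ P x) → (∀ x ∈ v.head?, ¬ P x) →
      cs ++ u = es ++ v → cs = es ∧ u = v := by
  intro cs
  induction cs with
  | nil =>
    intro es u v _ hes hu _ h
    cases es with
    | nil => simpa using h
    | cons e es =>
      exfalso
      simp only [List.nil_append] at h
      subst h
      exact hu e (by simp) (hes e (by simp))
  | cons c cs ih =>
    intro es u v hcs hes hu hv h
    cases es with
    | nil =>
      exfalso
      simp only [List.nil_append] at h
      subst h
      exact hv c (by simp) (hcs c (by simp))
    | cons e es =>
      simp only [List.cons_append, List.cons.injEq] at h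
      obtain ⟨rfl, h⟩ := h
      obtain ⟨h1, h2⟩ := ih es u v (fun x hx => hcs x (by simp [hx]))
        (fun x hx => hes x (by simp [hx])) hu hv h
      exact ⟨by rw [h1], h2⟩

lemma chunk_ne_nil {n : ℕ} {c : List (FreeMonoid A)} (hc : IsChunk ω n c) : c ≠ [] := by
  obtain ⟨d, cs, rfl, _⟩ := hc; simp

lemma chunks_eq {n : ℕ} :
    ∀ (S T : List (List (FreeMonoid A))), (∀ c ∈ S, IsChunk ω n c) →
      (∀ c ∈ T, IsChunk ω n c) → S.flatten = T.flatten → S = T := by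
  intro S
  induction S with
  | nil =>
    intro T _ hT h
    cases T with
    | nil => rfl
    | cons c T =>
      exfalso
      obtain ⟨d, cs, rfl, _⟩ := hT c (by simp)
      simp at h
  | cons c S ih =>
    intro T hS hT h
    cases T with
    | nil =>
      exfalso
      obtain ⟨d, cs, rfl, _⟩ := hS c (by simp)
      simp at h
    | cons e T =>
      obtain ⟨d, cs, rfl, hd, hdw, hcs⟩ := hS _ List.mem_cons_self
      obtain ⟨d', cs', rfl, hd', hdw', hcs'⟩ := hT _ List.mem_cons_self
      simp only [List.flatten_cons, List.cons_append, List.cons.injEq] at h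
      obtain ⟨rfl, h⟩ := h
      obtain ⟨h1, h2⟩ := runs_eq (P := fun x => x.wt ω = n) cs cs' S.flatten T.flatten
        (fun x hx => (hcs x hx).2) (fun x hx => (hcs' x hx).2)
        (head_flatten_chunks (fun c hc => hS c (by simp [hc])))
        (head_flatten_chunks (fun c hc => hT c (by simp [hc]))) h
      have := ih T (fun c hc => hS c (by simp [hc])) (fun c hc => hT c (by simp [hc])) h2
      rw [h1, this]

/-- Every list over `Z_{n+1}` can be expanded into a list of chunks at level `n`. -/
lemma exists_chunks {n : ℕ} (hn : 1 ≤ n) :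
    ∀ s : List (FreeMonoid A), (∀ z ∈ s, z ∈ lazardZ ω (n + 1)) →
      ∃ S : List (List (FreeMonoid A)), (∀ c ∈ S, IsChunk ω n c) ∧
        S.map List.prod = s := by
  intro s
  induction s with
  | nil => exact fun _ => ⟨[], by simp, rfl⟩
  | cons z s ih =>
    intro hs
    obtain ⟨S, hS, hSm⟩ := ih (fun x hx => hs x (by simp [hx]))
    obtain ⟨d, hd, hdw, cs, hcs, rfl⟩ := (mem_Z_succ_iff hn).1 (hs z (by simp))
    refine ⟨(d :: cs) :: S, ?_, by simp [hSm]⟩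
    intro c hc
    rcases List.mem_cons.1 hc with rfl | hc
    · exact ⟨d, cs, rfl, hd, hdw, hcs⟩
    · exact hS c hc

/-- Parsing a list over `Z_n` into a `C_n`-run followed by chunks. -/
lemma parse {n : ℕ} :
    ∀ s : List (FreeMonoid A), (∀ z ∈ s, z ∈ lazardZ ω n) →
      ∃ (cs : List (FreeMonoid A)) (S : List (List (FreeMonoid A))),
        (∀ x ∈ cs, x ∈ lazardC ω n) ∧ (∀ c ∈ S, IsChunk ω n c) ∧
        s = cs ++ S.flatten := by
  intro s
  induction s with
  | nil => exact fun _ => ⟨[], [], by simp, by simp, by simp⟩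
  | cons x s ih =>
    intro hs
    obtain ⟨cs, S, hcs, hS, rfl⟩ := ih (fun z hz => hs z (by simp [hz]))
    by_cases hx : x.wt ω = n
    · refine ⟨x :: cs, S, ?_, hS, by simp⟩
      intro y hy
      rcases List.mem_cons.1 hy with h | hy
      · subst h; exact ⟨hs _ (by simp), hx⟩
      · exact hcs y hy
    · refine ⟨[], (x :: cs) :: S, by simp, ?_, by simp⟩
      intro c hc
      rcases List.mem_cons.1 hc with rfl | hc
      · exact ⟨x, cs, rfl, hs x (by simp), hx, hcs⟩
      · exact hS c hc

/-- `Z_n` is a code: factorizations over `Z_n` are unique. -/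
lemma code (hω : ∀ a, 1 ≤ ω a) :
    ∀ n, 1 ≤ n → ∀ s t : List (FreeMonoid A), (∀ z ∈ s, z ∈ lazardZ ω n) →
      (∀ z ∈ t, z ∈ lazardZ ω n) → s.prod = t.prod → s = t := by
  intro n
  induction n with
  | zero => omega
  | succ n ih =>
    intro _ s t hs ht h
    rcases Nat.eq_zero_or_pos n with rfl | hn
    · -- base case: Z_1 = range of
      have key : ∀ s : List (FreeMonoid A), (∀ z ∈ s, z ∈ lazardZ ω 1) →
          s = s.prod.toList.map FreeMonoid.of := by
        intro s
        induction s with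
        | nil => intro _; rfl
        | cons x s ihs =>
          intro hxs
          obtain ⟨a, rfl⟩ := hxs x (by simp)
          have := ihs (fun z hz => hxs z (by simp [hz]))
          simp only [List.prod_cons, toList_mul, toList_of, List.map_cons,
            List.singleton_append, List.map_append]
          rw [← this]
      rw [key s hs, key t ht, h]
    · -- inductive step
      obtain ⟨S, hS, hSm⟩ := exists_chunks hn s hs
      obtain ⟨T, hT, hTm⟩ := exists_chunks hn t ht
      have hfs : ∀ z ∈ S.flatten, z ∈ lazardZ ω n := by
        intro z hz
        obtain ⟨c, hc, hzc⟩ := List.mem_flatten.1 hz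
        exact (hS c hc).subset_Z z hzc
      have hft : ∀ z ∈ T.flatten, z ∈ lazardZ ω n := by
        intro z hz
        obtain ⟨c, hc, hzc⟩ := List.mem_flatten.1 hz
        exact (hT c hc).subset_Z z hzc
      have hprod : S.flatten.prod = T.flatten.prod := by
        rw [List.prod_flatten, List.prod_flatten, hSm, hTm, h]
      have hflat := ih hn S.flatten T.flatten hfs hft hprod
      have := chunks_eq S T hS hT hflat
      rw [← hSm, ← hTm, this]

/-- Split-uniqueness: `p·v = q·w` with `p, q` lists over `C_n` and
`v, w ∈ Z_{n+1}*` forces `p = q` and `v = w`. -/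
lemma split_unique (hω : ∀ a, 1 ≤ ω a) {n : ℕ} (hn : 1 ≤ n)
    {p q : List (FreeMonoid A)} {v w : FreeMonoid A}
    (hp : ∀ x ∈ p, x ∈ lazardC ω n) (hq : ∀ x ∈ q, x ∈ lazardC ω n)
    (hv : v ∈ ZS ω (n + 1)) (hw : w ∈ ZS ω (n + 1))
    (h : p.prod * v = q.prod * w) : p = q ∧ v = w := by
  obtain ⟨sv, hsv, rfl⟩ := Submonoid.exists_list_of_mem_closure hv
  obtain ⟨sw, hsw, rfl⟩ := Submonoid.exists_list_of_mem_closure hw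
  obtain ⟨V, hV, hVm⟩ := exists_chunks hn sv hsv
  obtain ⟨W, hW, hWm⟩ := exists_chunks hn sw hsw
  have hVp : V.flatten.prod = sv.prod := by rw [List.prod_flatten, hVm]
  have hWp : W.flatten.prod = sw.prod := by rw [List.prod_flatten, hWm]
  have hprod : (p ++ V.flatten).prod = (q ++ W.flatten).prod := by
    rw [List.prod_append, List.prod_append, hVp, hWp, h]
  have hzl : ∀ z ∈ p ++ V.flatten, z ∈ lazardZ ω n := by
    intro z hz
    rcases List.mem_append.1 hz with hz | hz
    · exact (hp z hz).1
    · obtain ⟨c, hc, hzc⟩ := List.mem_flatten.1 hz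
      exact (hV c hc).subset_Z z hzc
  have hzr : ∀ z ∈ q ++ W.flatten, z ∈ lazardZ ω n := by
    intro z hz
    rcases List.mem_append.1 hz with hz | hz
    · exact (hq z hz).1
    · obtain ⟨c, hc, hzc⟩ := List.mem_flatten.1 hz
      exact (hW c hc).subset_Z z hzc
  have heq := code hω n hn _ _ hzl hzr hprod
  obtain ⟨h1, h2⟩ := runs_eq (P := fun x => x.wt ω = n) p q V.flatten W.flatten
    (fun x hx => (hp x hx).2) (fun x hx => (hq x hx).2)
    (head_flatten_chunks hV) (head_flatten_chunks hW) heq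
  refine ⟨h1, ?_⟩
  rw [← hVp, ← hWp, h2]

/-- The main lemma: unique increasing factorization at each level `n`. -/
lemma main (hω : ∀ a, 1 ≤ ω a) :
    ∀ μ n : ℕ, ∀ w : FreeMonoid A, 1 ≤ n → w ∈ ZS ω n → 2 * w.wt ω ≤ μ + n →
      ∃! l : List (FreeMonoid A),
        (∀ u ∈ l, ∃ m, n ≤ m ∧ u ∈ lazardC ω m) ∧
        (l.map (FreeMonoid.wt ω)).Chain' (· ≤ ·) ∧
        l.prod = w := by
  intro μ
  induction μ with
  | zero =>
    intro n w hn hw hwt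
    -- here w must be 1
    have hws : w = 1 := by
      by_contra hw1
      obtain ⟨s, hs, rfl⟩ := Submonoid.exists_list_of_mem_closure hw
      cases s with
      | nil => exact hw1 rfl
      | cons z s =>
        have h1 : n ≤ z.wt ω := wt_ge_of_mem_Z hω n hn z (hs z (by simp))
        have h2 : z.wt ω ≤ (z :: s).prod.wt ω := by
          rw [List.prod_cons, wt_mul]; omega
        omega
    subst hws
    refine ⟨[], ⟨by simp, List.isChain_nil, rfl⟩, ?_⟩
    rintro l ⟨hf, _, hp⟩
    cases l with
    | nil => rfl
    | cons u l =>
      exfalso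
      obtain ⟨m, hm, hu⟩ := hf u (by simp)
      have h1 : u.wt ω = m := hu.2
      have h2 : u.wt ω ≤ (u :: l).prod.wt ω := by
        rw [List.prod_cons, wt_mul]; omega
      have h3 : (1 : FreeMonoid A).wt ω = 0 := rfl
      rw [hp, h3] at h2
      omega
  | succ μ ih =>
    intro n w hn hw hwt
    by_cases hw1 : w = 1
    · subst hw1
      refine ⟨[], ⟨by simp, List.isChain_nil, rfl⟩, ?_⟩
      rintro l ⟨hf, _, hp⟩
      cases l with
      | nil => rfl
      | cons u l =>
        exfalso
        obtain ⟨m, hm, hu⟩ := hf u (by simp)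
        have h1 : u.wt ω = m := hu.2
        have h2 : u.wt ω ≤ (u :: l).prod.wt ω := by
          rw [List.prod_cons, wt_mul]; omega
        have h3 : (1 : FreeMonoid A).wt ω = 0 := rfl
        rw [hp, h3] at h2
        omega
    · obtain ⟨s, hs, hsp⟩ := Submonoid.exists_list_of_mem_closure hw
      obtain ⟨cs, S, hcs, hS, hsplit⟩ := parse s hs
      set w' : FreeMonoid A := S.flatten.prod with hw'def
      have hww' : w = cs.prod * w' := by
        rw [← hsp, hsplit, List.prod_append]
      have hw'mem : w' ∈ ZS ω (n + 1) := by
        rw [hw'def, List.prod_flatten]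
        exact Submonoid.list_prod_mem _ (fun c hc => by
          obtain ⟨d, hd, rfl⟩ := List.mem_map.1 hc
          exact Submonoid.subset_closure ((hS d hd).prod_mem hn))
      have hw'wt : w'.wt ω ≤ w.wt ω := by
        rw [hww', wt_mul]; omega
      have hw'bound : 2 * w'.wt ω ≤ μ + (n + 1) := by omega
      obtain ⟨l', ⟨hl'f, hl'c, hl'p⟩, hl'u⟩ := ih (n + 1) w' (by omega) hw'mem hw'bound
      refine ⟨cs ++ l', ⟨?_, ?_, ?_⟩, ?_⟩
      · intro u hu
        rcases List.mem_append.1 hu with hu | hu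
        · exact ⟨n, le_rfl, hcs u hu⟩
        · obtain ⟨m, hm, hmu⟩ := hl'f u hu
          exact ⟨m, by omega, hmu⟩
      · change List.IsChain _ _
        rw [List.isChain_iff_pairwise, List.map_append, List.pairwise_append]
        refine ⟨?_, ?_, ?_⟩
        · apply List.pairwise_of_forall_mem_list
          intro a ha b hb
          obtain ⟨x, hx, rfl⟩ := List.mem_map.1 ha
          obtain ⟨y, hy, rfl⟩ := List.mem_map.1 hb
          rw [(hcs x hx).2, (hcs y hy).2]
        · rw [← List.isChain_iff_pairwise]; exact hl'c
        · intro a ha b hb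
          obtain ⟨x, hx, rfl⟩ := List.mem_map.1 ha
          obtain ⟨y, hy, rfl⟩ := List.mem_map.1 hb
          obtain ⟨m, hm, hmy⟩ := hl'f y hy
          rw [(hcs x hx).2, hmy.2]
          omega
      · rw [List.prod_append, hl'p, hww']
      · -- uniqueness
        rintro l ⟨hf, hc, hp⟩
        set p := l.takeWhile (fun u => u.wt ω = n) with hpdef
        set r := l.dropWhile (fun u => u.wt ω = n) with hrdef
        have hlpr : l = p ++ r := List.takeWhile_append_dropWhile.symm
        have hpmem : ∀ x ∈ p, x ∈ lazardC ω n := by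
          intro x hx
          have hxw : x.wt ω = n := by
            have := List.mem_takeWhile_imp hx
            simpa using this
          obtain ⟨m, hm, hmx⟩ := hf x (by rw [hlpr]; exact List.mem_append_left _ hx)
          have : m = n := by rw [← hmx.2, hxw]
          subst this; exact hmx
        have hsort : l.Pairwise (fun a b => a.wt ω ≤ b.wt ω) := by
          have := List.isChain_iff_pairwise.1 hc
          rwa [List.pairwise_map] at this
        have hrsort : r.Pairwise (fun a b => a.wt ω ≤ b.wt ω) :=
          hsort.sublist (List.dropWhile_sublist _)
        have hrwt : ∀ x ∈ r, n + 1 ≤ x.wt ω := by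
          cases hr : r with
          | nil => simp
          | cons y r' =>
            have hyw : ¬ (y.wt ω = n) := by
              have h0 := List.head?_dropWhile_not (fun u => decide (u.wt ω = n)) l
              rw [← hrdef, hr] at h0
              simpa using h0
            obtain ⟨m', hm', hm'y⟩ := hf y (by
              rw [hlpr, hr]; exact List.mem_append_right _ (by simp))
            have hwy : y.wt ω = m' := hm'y.2
            have hy1 : n + 1 ≤ y.wt ω := by omega
            intro x hx
            rcases List.mem_cons.1 hx with h | hx'
            · subst h; exact hy1
            · have : y.wt ω ≤ x.wt ω := by
                rw [hr] at hrsort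
                exact (List.pairwise_cons.1 hrsort).1 x hx'
              omega
        have hrmem : ∀ x ∈ r, ∃ m, n + 1 ≤ m ∧ x ∈ lazardC ω m := by
          intro x hx
          obtain ⟨m, hm, hmx⟩ := hf x (by rw [hlpr]; exact List.mem_append_right _ hx)
          have h1 : x.wt ω = m := hmx.2
          have h2 := hrwt x hx
          exact ⟨m, by omega, hmx⟩
        have hrZS : r.prod ∈ ZS ω (n + 1) :=
          Submonoid.list_prod_mem _ (fun x hx => by
            obtain ⟨m, hm, hmx⟩ := hrmem x hx
            exact C_subset_ZS (by omega) hm hmx)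
        have heq : p.prod * r.prod = cs.prod * w' := by
          rw [← List.prod_append, ← hlpr, hp, hww']
        obtain ⟨hpe, hre⟩ := split_unique hω hn hpmem hcs hrZS hw'mem heq
        have hrl' : r = l' := by
          apply hl'u
          refine ⟨hrmem, ?_, hre⟩
          change List.IsChain _ _
          rw [List.isChain_iff_pairwise, List.pairwise_map]
          exact hrsort
        rw [hlpr, hpe, hrl']

end LazardAux

/-- The Lazard right composition `F(A, ω) = (C_n)` is a factorization of the
free monoid `A*`: every word factors uniquely as a product of elements of
`⋃ₙ Cₙ` with weakly increasing weights. -/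
theorem lazard_right_composition_factorization {A : Type*} (ω : A → ℕ)
    (hω : ∀ a, 1 ≤ ω a) (w : FreeMonoid A) :
    ∃! l : List (FreeMonoid A),
      (∀ u ∈ l, ∃ n, 1 ≤ n ∧ u ∈ lazardC ω n) ∧
      (l.map (FreeMonoid.wt ω)).Chain' (· ≤ ·) ∧
      l.prod = w := by
  have hw : w ∈ LazardAux.ZS ω 1 := by
    have : lazardZ ω 1 = Set.range FreeMonoid.of := rfl
    rw [LazardAux.ZS, this, FreeMonoid.closure_range_of]
    trivial
  exact LazardAux.main hω (2 * w.wt ω) 1 w le_rfl hw (by omega)
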